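/- arXiv:0705.2112 — 2 statements merged into one kernel-verified Lean document; each statement's English description precedes it below -/
import Mathlib

section
/- Let 0 < a₂, 0 < c with a₂ ≠ c, and define a₃ = (1/√a₂ − 1/√c)^(−2) and a₁ = 3a₂c / (4(a₂ + c − √(c·a₂))). Then the identity 1/c² + 1/a₂² + 1/a₃² − 2(1/(c·a₂) + 1/(c·a₃) + 1/(a₂·a₃)) = 0 holds, and a₁ = 3c·a₂·a₃ / (2(a₂·a₃ + c(a₂ + a₃))). -/
theorem stmt_0 (a₂ c : ℝ) (ha₂ : 0 < a₂) (hc : 0 < c) (hne : a₂ ≠ c)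
    (a₃ a₁ : ℝ)
    (ha₃ : a₃ = ((1 / Real.sqrt a₂ - 1 / Real.sqrt c) ^ 2)⁻¹)
    (ha₁ : a₁ = 3 * a₂ * c / (4 * (a₂ + c - Real.sqrt (c * a₂)))) :
    1 / c ^ 2 + 1 / a₂ ^ 2 + 1 / a₃ ^ 2
      - 2 * (1 / (c * a₂) + 1 / (c * a₃) + 1 / (a₂ * a₃)) = 0 ∧
    a₁ = 3 * c * a₂ * a₃ / (2 * (a₂ * a₃ + c * (a₂ + a₃))) := by
  set s := Real.sqrt a₂ with hsdef
  set t := Real.sqrt c with htdef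
  have hs : 0 < s := Real.sqrt_pos.mpr ha₂
  have ht : 0 < t := Real.sqrt_pos.mpr hc
  have hs2 : s ^ 2 = a₂ := Real.sq_sqrt ha₂.le
  have ht2 : t ^ 2 = c := Real.sq_sqrt hc.le
  have hne' : s ≠ t := by
    intro h
    apply hne
    rw [← hs2, ← ht2, h]
  have hts : t - s ≠ 0 := sub_ne_zero.mpr (Ne.symm hne')
  have hst : Real.sqrt (c * a₂) = t * s := by
    rw [Real.sqrt_mul hc.le]
  have ha₃' : a₃ = s ^ 2 * t ^ 2 / (t - s) ^ 2 := by
    rw [ha₃]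
    rw [div_sub_div _ _ hs.ne' ht.ne', one_mul, mul_one]
    rw [div_pow, ← one_div, one_div_div]
    congr 1
    ring
  have ha₃ne : a₃ ≠ 0 := by
    rw [ha₃']
    positivity
  have hd : (0:ℝ) < s ^ 2 + t ^ 2 - s * t := by nlinarith [sq_nonneg (s - t)]
  constructor
  · rw [ha₃', ← hs2, ← ht2]
    field_simp
    ring
  · rw [ha₁, ha₃', hst, ← hs2, ← ht2]
    rw [div_eq_div_iff]
    · field_simp
      ring
    · nlinarith
    · have h1 : (0:ℝ) < s ^ 2 * (s ^ 2 * t ^ 2 / (t - s) ^ 2) +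
          t ^ 2 * (s ^ 2 + s ^ 2 * t ^ 2 / (t - s) ^ 2) := by positivity
      nlinarith
end

section
/- Let α = √(2/√3) and define a₁ = 1/(2α), a₂ = α/(α² + 1), a₃ = α/(α² − 1), c = 1/α. Then 1/c² + 1/a₂² + 1/a₃² − 2(1/(c·a₂) + 1/(c·a₃) + 1/(a₂·a₃)) = 0 and a₁ = 3c·a₂·a₃/(2(a₂·a₃ + c(a₂ + a₃))). -/
theorem stmt_9 (α a₁ a₂ a₃ c : ℝ)
    (hα : α = Real.sqrt (2 / Real.sqrt 3))
    (ha₁ : a₁ = 1 / (2 * α)) (ha₂ : a₂ = α / (α ^ 2 + 1))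
    (ha₃ : a₃ = α / (α ^ 2 - 1)) (hc : c = 1 / α) :
    1 / c ^ 2 + 1 / a₂ ^ 2 + 1 / a₃ ^ 2
      - 2 * (1 / (c * a₂) + 1 / (c * a₃) + 1 / (a₂ * a₃)) = 0 ∧
    a₁ = 3 * c * a₂ * a₃ / (2 * (a₂ * a₃ + c * (a₂ + a₃))) := by
  have hr : Real.sqrt 3 > 0 := Real.sqrt_pos.mpr (by norm_num)
  have hr2 : Real.sqrt 3 ^ 2 = 3 := Real.sq_sqrt (by norm_num)
  have hrlt : Real.sqrt 3 < 2 := by nlinarith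
  have hαsq : α ^ 2 = 2 / Real.sqrt 3 := by
    rw [hα, Real.sq_sqrt (by positivity)]
  have h4 : α ^ 4 = 4 / 3 := by
    have : α ^ 4 = (α ^ 2) ^ 2 := by ring
    rw [this, hαsq, div_pow, hr2]; norm_num
  have hαpos : α > 0 := by
    rw [hα]; exact Real.sqrt_pos.mpr (by positivity)
  have hα0 : α ≠ 0 := ne_of_gt hαpos
  have hp1 : α ^ 2 + 1 ≠ 0 := by positivity
  have hm1 : α ^ 2 - 1 ≠ 0 := by
    have : α ^ 2 > 1 := by
      rw [hαsq]
      rw [gt_iff_lt, lt_div_iff₀ hr]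
      linarith
    linarith
  subst ha₁ ha₂ ha₃ hc
  constructor
  · field_simp
    nlinarith [h4, sq_nonneg α]
  · have hden : α / (α ^ 2 + 1) * (α / (α ^ 2 - 1)) +
      1 / α * (α / (α ^ 2 + 1) + α / (α ^ 2 - 1)) = 3 * α ^ 2 / ((α ^ 2 + 1) * (α ^ 2 - 1)) := by
      field_simp
      ring
    rw [hden]
    field_simp
end
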